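/- Let n ≥ 0 and r ≥ 2 be integers. Then |F_{1,r}(n)| = |O_{1,r}(n)|, i.e., the number of partitions of n in which exactly one difference of consecutive parts (including the last part, taking the part after the last to be 0) is at least r and all other such differences are at most r−1 equals the number of partitions of n with exactly one part size divisible by r. -/

import Mathlib

open scoped Classical

namespace BeckPaper

/-- The parts of a partition, sorted in non-increasing order. -/
def partsList {n : ℕ} (p : n.Partition) : List ℕ := p.parts.sort (· ≥ ·)

/-- The `i`-th part of a partition (`1`-indexed); `0` if `i` exceeds the number of parts. -/
def part {n : ℕ} (p : n.Partition) (i : ℕ) : ℕ := (partsList p).getD (i - 1) 0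

/-- `ℓ(λ)`: the number of parts of `λ`. -/
def numParts {n : ℕ} (p : n.Partition) : ℕ := Multiset.card p.parts

/-- `ℓ_t(λ)`: the number of parts of `λ` congruent to `t` modulo `r`. -/
def lMod (r t : ℕ) {n : ℕ} (p : n.Partition) : ℕ :=
  Multiset.card (p.parts.filter (fun x => x % r = t % r))

/-- `ℓ̄_t(λ)`: the number of different part sizes appearing at least `t` times in `λ`. -/
def lRep (t : ℕ) {n : ℕ} (p : n.Partition) : ℕ :=
  (p.parts.toFinset.filter (fun s => t ≤ p.parts.count s)).card

/-- `ℓ̄(λ)`: the number of different part sizes of `λ`. -/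
def lDist {n : ℕ} (p : n.Partition) : ℕ := p.parts.toFinset.card

/-- `d_t(λ)`: the number of indices `1 ≤ i ≤ ℓ(λ)` with `λ_i − λ_{i+1} ≥ t`. -/
def dCount (t : ℕ) {n : ℕ} (p : n.Partition) : ℕ :=
  ((Finset.Icc 1 (numParts p)).filter (fun i => t ≤ part p i - part p (i + 1))).card

/-- `λ ∈ O_r(n)`: no part is divisible by `r`. -/
def IsRegular (r : ℕ) {n : ℕ} (p : n.Partition) : Prop := ∀ x ∈ p.parts, ¬ r ∣ x

/-- `λ ∈ D_r(n)`: no part appears more than `r − 1` times. -/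
def IsRestricted (r : ℕ) {n : ℕ} (p : n.Partition) : Prop :=
  ∀ s : ℕ, p.parts.count s ≤ r - 1

/-- `λ ∈ F_r(n)`: all differences of consecutive parts (with `λ_{k+1} = 0`) are `≤ r − 1`. -/
def IsFlat (r : ℕ) {n : ℕ} (p : n.Partition) : Prop :=
  ∀ i, 1 ≤ i → i ≤ numParts p → part p i - part p (i + 1) ≤ r - 1

/-- `λ ∈ O_{1,r}(n)`: the set of part sizes divisible by `r` has exactly one element. -/
def IsOneRegular (r : ℕ) {n : ℕ} (p : n.Partition) : Prop :=
  (p.parts.toFinset.filter (fun s => r ∣ s)).card = 1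

/-- `λ ∈ D_{1,r}(n)`: exactly one part size appears at least `r` times. -/
def IsOneRestricted (r : ℕ) {n : ℕ} (p : n.Partition) : Prop :=
  (p.parts.toFinset.filter (fun s => r ≤ p.parts.count s)).card = 1

/-- `λ ∈ F_{1,r}(n)`: exactly one difference of consecutive parts is `≥ r`, and all
other such differences are `≤ r − 1`. -/
def IsOneFlat (r : ℕ) {n : ℕ} (p : n.Partition) : Prop :=
  ∃ i, (1 ≤ i ∧ i ≤ numParts p ∧ r ≤ part p i - part p (i + 1)) ∧
    ∀ j, 1 ≤ j → j ≤ numParts p → j ≠ i → part p j - part p (j + 1) ≤ r - 1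

/-- `λ ∈ T_r(n)`: exactly one part size has multiplicity at least `r`, and that
multiplicity is strictly less than `2r`. -/
def IsInT (r : ℕ) {n : ℕ} (p : n.Partition) : Prop :=
  ∃ s : ℕ, (r ≤ p.parts.count s ∧ p.parts.count s < 2 * r) ∧
    ∀ s' : ℕ, r ≤ p.parts.count s' → s' = s

/-! ### Basic facts about `partsList` and `part` -/

variable {n : ℕ}

lemma partsList_sorted (p : n.Partition) : (partsList p).Pairwise (· ≥ ·) :=
  Multiset.pairwise_sort _ _

lemma partsList_coe (p : n.Partition) : (partsList p : Multiset ℕ) = p.parts :=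
  Multiset.sort_eq _ _

lemma length_partsList (p : n.Partition) : (partsList p).length = numParts p := by
  rw [numParts, ← partsList_coe]; rfl

lemma mem_partsList {p : n.Partition} {x : ℕ} : x ∈ partsList p ↔ x ∈ p.parts := by
  rw [← partsList_coe]; exact Iff.rfl

/-- count of parts that are `≥ i`. -/
def cnt {n : ℕ} (p : n.Partition) (i : ℕ) : ℕ := Multiset.countP (fun x => i ≤ x) p.parts

lemma getD_le_of_forall_le {L : List ℕ} {a : ℕ} (h : ∀ x ∈ L, x ≤ a) (j : ℕ) :
    L.getD j 0 ≤ a := by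
  induction L generalizing j with
  | nil => simp
  | cons b L ih =>
    cases j with
    | zero => exact h b (by simp)
    | succ j => exact ih (fun x hx => h x (by simp [hx])) j

lemma sorted_getD_anti {L : List ℕ} (hL : L.Pairwise (· ≥ ·)) {j k : ℕ} (hjk : j ≤ k) :
    L.getD k 0 ≤ L.getD j 0 := by
  induction L generalizing j k with
  | nil => simp
  | cons b L ih =>
    rw [List.pairwise_cons] at hL
    cases k with
    | zero =>
      interval_cases j
      exact le_refl _
    | succ k =>
      cases j with
      | zero =>
        exact getD_le_of_forall_le (fun x hx => hL.1 x hx) k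
      | succ j => exact ih hL.2 (by omega)

/-- The key lemma : `i ≤ λ_v ↔ #(parts ≥ i) ≥ v`, for sorted lists. -/
lemma sorted_le_getD_iff {L : List ℕ} (hL : L.Pairwise (· ≥ ·)) {i v : ℕ}
    (hi : 1 ≤ i) (hv : 1 ≤ v) :
    i ≤ L.getD (v - 1) 0 ↔ v ≤ L.countP (fun x => decide (i ≤ x)) := by
  induction L generalizing v with
  | nil => simp; omega
  | cons a L ih =>
    rw [List.pairwise_cons] at hL
    rw [List.countP_cons]
    by_cases hia : i ≤ a
    · simp only [hia, decide_eq_true_eq, if_pos]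
      rcases Nat.eq_or_lt_of_le hv with h1 | h1
      · rw [← h1]
        simp only [Nat.sub_self, List.getD]
        constructor
        · intro _; omega
        · intro _; simpa using hia
      · have hv1 : (1:ℕ) ≤ v - 1 := by omega
        have hidx : (a :: L).getD (v - 1) 0 = L.getD (v - 1 - 1) 0 := by
          have h2 : v - 1 = (v - 2) + 1 := by omega
          rw [h2]
          simp only [List.getD_cons_succ]
          norm_num
        rw [hidx, ih hL.2 hv1]
        omega
    · have hzero : L.countP (fun x => decide (i ≤ x)) = 0 := by
        rw [List.countP_eq_zero]
        intro x hx
        simp only [decide_eq_true_eq]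
        have := hL.1 x hx
        omega
      have hgd : (a :: L).getD (v - 1) 0 ≤ a := by
        rcases Nat.eq_or_lt_of_le hv with h1 | h1
        · rw [← h1]; simp
        · have : v - 1 = (v - 2) + 1 := by omega
          rw [this]
          simp only [List.getD_cons_succ]
          exact getD_le_of_forall_le (fun x hx => hL.1 x hx) _
      have : (decide (i ≤ a)) = false := by simpa using hia
      rw [this, hzero]
      simp only [if_neg Bool.false_ne_true]
      constructor
      · intro h; omega
      · intro h; omega


/-! ### Partition-level consequences -/

lemma le_part_iff {p : n.Partition} {i v : ℕ} (hi : 1 ≤ i) (hv : 1 ≤ v) :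
    i ≤ part p v ↔ v ≤ cnt p i := by
  rw [part, cnt, ← partsList_coe, Multiset.coe_countP]
  exact sorted_le_getD_iff (partsList_sorted p) hi hv

lemma part_anti (p : n.Partition) {u v : ℕ} (huv : u ≤ v) : part p v ≤ part p u :=
  sorted_getD_anti (partsList_sorted p) (by omega)

lemma cnt_one (p : n.Partition) : cnt p 1 = numParts p := by
  rw [cnt, numParts, Multiset.countP_eq_card_filter, Multiset.filter_eq_self.2]
  intro x hx
  exact p.parts_pos hx

lemma part_pos_iff {p : n.Partition} {v : ℕ} (hv : 1 ≤ v) :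
    1 ≤ part p v ↔ v ≤ numParts p := by
  rw [le_part_iff le_rfl hv, cnt_one]

lemma part_eq_zero_of_gt {p : n.Partition} {v : ℕ} (hv : numParts p < v) :
    part p v = 0 := by
  by_contra h
  have h1 : 1 ≤ v := by omega
  have h2 : 1 ≤ part p v := Nat.one_le_iff_ne_zero.2 h
  have := (part_pos_iff h1).1 h2
  omega

lemma le_part_one {p : n.Partition} {x : ℕ} (hx : x ∈ p.parts) : x ≤ part p 1 := by
  have hx1 : 1 ≤ x := p.parts_pos hx
  rw [le_part_iff hx1 le_rfl, cnt]
  rw [Nat.one_le_iff_ne_zero, ← Nat.pos_iff_ne_zero, Multiset.countP_pos]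
  exact ⟨x, hx, le_rfl⟩

lemma cnt_eq_zero_of_gt {p : n.Partition} {i : ℕ} (hi : part p 1 < i) : cnt p i = 0 := by
  rw [cnt, Multiset.countP_eq_zero]
  intro x hx
  have := le_part_one hx
  omega

lemma cnt_anti (p : n.Partition) {i j : ℕ} (hij : i ≤ j) : cnt p j ≤ cnt p i := by
  rw [cnt, cnt, Multiset.countP_eq_card_filter, Multiset.countP_eq_card_filter]
  exact Multiset.card_le_card (Multiset.monotone_filter_right _ (fun b hb => by omega))

/-! ### List sum helpers -/

lemma sum_map_add' {α : Type*} (l : List α) (f g : α → ℕ) :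
    (l.map (fun i => f i + g i)).sum = (l.map f).sum + (l.map g).sum := by
  induction l with
  | nil => simp
  | cons a l ih => simp only [List.map_cons, List.sum_cons, ih]; ring

lemma sum_ite_range' (m x : ℕ) :
    ((List.range' 1 m).map (fun i => if i ≤ x then (1:ℕ) else 0)).sum = min x m := by
  induction m with
  | zero => simp
  | succ m ih =>
    rw [List.range'_concat, List.map_append, List.sum_append, ih]
    simp only [List.map_cons, List.map_nil, List.sum_cons, List.sum_nil]
    by_cases h : 1 + 1 * m ≤ x
    · rw [if_pos h]; omega
    · rw [if_neg h]; omega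

lemma countP_ite_range' (m A B : ℕ) (hBA : B ≤ A) (P : ℕ → Prop) [DecidablePred P]
    (hP : ∀ i, 1 ≤ i → i ≤ m → (P i ↔ (i ≤ A ∧ ¬ i ≤ B))) :
    (List.range' 1 m).countP (fun i => decide (P i)) = min A m - min B m := by
  induction m with
  | zero => simp
  | succ m ih =>
    rw [List.range'_concat, List.countP_append]
    rw [ih (fun i h1 h2 => hP i h1 (by omega))]
    have : List.countP (fun i => decide (P i)) [1 + 1 * m]
        = if P (1 + 1 * m) then 1 else 0 := by
      simp [List.countP_cons]
    rw [this]
    rw [if_congr (hP (1 + 1 * m) (by omega) (by omega)) rfl rfl]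
    by_cases hA : 1 + 1 * m ≤ A
    · by_cases hB : 1 + 1 * m ≤ B
      · rw [if_neg (by omega)]; omega
      · rw [if_pos ⟨hA, hB⟩]; omega
    · rw [if_neg (by omega)]; omega

/-! ### The conjugate partition -/

def conjL {n : ℕ} (p : n.Partition) : List ℕ :=
  (List.range' 1 (part p 1)).map (fun i => cnt p i)

lemma conjL_sorted (p : n.Partition) : (conjL p).Pairwise (· ≥ ·) := by
  rw [conjL, List.pairwise_map]
  exact (List.pairwise_lt_range').imp (fun h => cnt_anti p (by omega))

lemma mem_conjL_pos {p : n.Partition} {x : ℕ} (hx : x ∈ conjL p) : 0 < x := by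
  rw [conjL, List.mem_map] at hx
  obtain ⟨i, hi, rfl⟩ := hx
  rw [List.mem_range'_1] at hi
  have h1 : 1 ≤ i := hi.1
  have h2 : i ≤ part p 1 := by omega
  have := (le_part_iff h1 le_rfl).1 h2
  omega

lemma conjL_sum (p : n.Partition) : (conjL p).sum = n := by
  rw [conjL]
  have : ∀ (s : Multiset ℕ) (m : ℕ), (∀ x ∈ s, 1 ≤ x ∧ x ≤ m) →
      ((List.range' 1 m).map (fun i => Multiset.countP (fun x => i ≤ x) s)).sum = s.sum := by
    intro s m
    induction s using Multiset.induction with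
    | empty => intro _; simp
    | cons x s ih =>
      intro hs
      have hx := hs x (by simp)
      simp only [Multiset.countP_cons]
      rw [sum_map_add' _ _ (fun i => if i ≤ x then 1 else 0),
        ih (fun y hy => hs y (by simp [hy])), sum_ite_range', Multiset.sum_cons]
      have : min x m = x := by omega
      omega
  have h2 := this p.parts (part p 1)
    (fun x hx => ⟨p.parts_pos hx, le_part_one hx⟩)
  rw [show (fun i => cnt p i) = (fun i => Multiset.countP (fun x => i ≤ x) p.parts) from rfl, h2,
    p.parts_sum]

def conj {n : ℕ} (p : n.Partition) : n.Partition where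
  parts := (conjL p : Multiset ℕ)
  parts_pos := fun hx => mem_conjL_pos hx
  parts_sum := by rw [Multiset.sum_coe, conjL_sum]

lemma partsList_conj (p : n.Partition) : partsList (conj p) = conjL p :=
  List.Perm.eq_of_pairwise'
    (partsList_sorted _) (conjL_sorted p) (Multiset.coe_eq_coe.1 (partsList_coe (conj p)))

lemma numParts_conj (p : n.Partition) : numParts (conj p) = part p 1 := by
  rw [← length_partsList, partsList_conj, conjL, List.length_map, List.length_range']

lemma part_conj (p : n.Partition) {i : ℕ} (hi : 1 ≤ i) : part (conj p) i = cnt p i := by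
  rw [part, partsList_conj, conjL]
  by_cases h : i - 1 < (List.range' 1 (part p 1)).length
  · rw [List.getD_eq_getElem _ _ (by simpa using h), List.getElem_map, List.getElem_range']
    congr 1
    omega
  · rw [List.getD_eq_default]
    · symm
      apply cnt_eq_zero_of_gt
      rw [List.length_range'] at h
      omega
    · simpa using h

lemma count_conj (p : n.Partition) {v : ℕ} (hv : 1 ≤ v) :
    Multiset.count v (conj p).parts = part p v - part p (v + 1) := by
  show Multiset.count v (conjL p : Multiset ℕ) = _
  rw [conjL, ← Multiset.map_coe, Multiset.count_map, ← Multiset.countP_eq_card_filter,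
    Multiset.coe_countP]
  have hA : part p v ≤ part p 1 := part_anti p hv
  have hB : part p (v+1) ≤ part p v := part_anti p (by omega)
  rw [countP_ite_range' (part p 1) (part p v) (part p (v+1)) hB]
  · omega
  · intro i h1 h2
    rw [le_part_iff h1 hv, le_part_iff h1 (by omega)]
    omega

lemma count_pos_part {p : n.Partition} : Multiset.count 0 p.parts = 0 := by
  rw [Multiset.count_eq_zero]
  intro h
  exact absurd (p.parts_pos h) (by omega)

lemma cnt_sub_cnt (p : n.Partition) (v : ℕ) :
    cnt p v = cnt p (v + 1) + Multiset.count v p.parts := by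
  rw [cnt, cnt, Multiset.countP_eq_card_filter, Multiset.countP_eq_card_filter]
  have h := Multiset.filter_add_filter (fun x => v + 1 ≤ x) (fun x => v = x) p.parts
  have h1 : Multiset.filter (fun x => v + 1 ≤ x ∨ v = x) p.parts
      = Multiset.filter (fun x => v ≤ x) p.parts := by
    apply Multiset.filter_congr
    intro x _
    constructor
    · intro hx; omega
    · intro hx; omega
  have h2 : Multiset.filter (fun x => v + 1 ≤ x ∧ v = x) p.parts = 0 := by
    rw [Multiset.filter_eq_nil]
    intro x _ hx
    omega
  rw [h1, h2] at h
  have hc := congrArg Multiset.card h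
  rw [Multiset.card_add, Multiset.card_add] at hc
  rw [Multiset.count, Multiset.countP_eq_card_filter]
  simp only [Multiset.card_zero, add_zero] at hc
  omega


lemma conj_conj (p : n.Partition) : conj (conj p) = p := by
  apply Nat.Partition.ext
  rw [Multiset.ext]
  intro v
  rcases Nat.eq_zero_or_pos v with rfl | hv
  · rw [count_pos_part, count_pos_part]
  · rw [count_conj _ hv, part_conj _ hv, part_conj _ (by omega : 1 ≤ v + 1)]
    have h1 := cnt_sub_cnt p v
    omega

lemma isOneRestricted_conj_iff {r : ℕ} (hr : 1 ≤ r) (p : n.Partition) :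
    IsOneRestricted r (conj p) ↔ dCount r p = 1 := by
  rw [IsOneRestricted, dCount]
  have hset : (conj p).parts.toFinset.filter (fun s => r ≤ (conj p).parts.count s)
      = (Finset.Icc 1 (numParts p)).filter (fun i => r ≤ part p i - part p (i + 1)) := by
    ext v
    simp only [Finset.mem_filter, Multiset.mem_toFinset, Finset.mem_Icc]
    constructor
    · rintro ⟨hmem, hcount⟩
      have hv : 1 ≤ v := (conj p).parts_pos hmem
      rw [count_conj p hv] at hcount
      refine ⟨⟨hv, ?_⟩, hcount⟩
      by_contra h
      have h0 := part_eq_zero_of_gt (p := p) (v := v) (by omega)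
      omega
    · rintro ⟨⟨hv, hvk⟩, hd⟩
      have hc : r ≤ (conj p).parts.count v := by rw [count_conj p hv]; exact hd
      refine ⟨?_, hc⟩
      rw [← Multiset.count_pos]
      omega
  rw [hset]

lemma isOneFlat_iff_dCount {r : ℕ} (hr : 1 ≤ r) (p : n.Partition) :
    IsOneFlat r p ↔ dCount r p = 1 := by
  rw [IsOneFlat, dCount]
  constructor
  · rintro ⟨i, ⟨hi1, hik, hir⟩, hother⟩
    rw [Finset.card_eq_one]
    refine ⟨i, ?_⟩
    ext j
    simp only [Finset.mem_filter, Finset.mem_Icc, Finset.mem_singleton]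
    constructor
    · rintro ⟨⟨hj1, hjk⟩, hjr⟩
      by_contra hne
      have := hother j hj1 hjk hne
      omega
    · rintro rfl
      exact ⟨⟨hi1, hik⟩, hir⟩
  · intro h
    rw [Finset.card_eq_one] at h
    obtain ⟨i, hi⟩ := h
    rw [Finset.ext_iff] at hi
    have hii := (hi i).2 (Finset.mem_singleton_self i)
    simp only [Finset.mem_filter, Finset.mem_Icc] at hii
    refine ⟨i, ⟨hii.1.1, hii.1.2, hii.2⟩, ?_⟩
    intro j hj1 hjk hne
    by_contra h2
    have hj := (hi j).1 (by
      simp only [Finset.mem_filter, Finset.mem_Icc]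
      exact ⟨⟨hj1, hjk⟩, by omega⟩)
    simp only [Finset.mem_singleton] at hj
    exact hne hj

lemma card_oneFlat_eq_card_oneRestricted (r : ℕ) (hr : 1 ≤ r) :
    (Finset.univ.filter (fun p : n.Partition => IsOneFlat r p)).card
      = (Finset.univ.filter (fun p : n.Partition => IsOneRestricted r p)).card := by
  apply Finset.card_bij' (fun p _ => conj p) (fun q _ => conj q)
  · intro p hp
    simp only [Finset.mem_filter, Finset.mem_univ, true_and] at *
    rw [isOneRestricted_conj_iff hr, ← isOneFlat_iff_dCount hr]
    exact hp
  · intro q hq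
    simp only [Finset.mem_filter, Finset.mem_univ, true_and] at *
    rw [isOneFlat_iff_dCount hr, ← isOneRestricted_conj_iff hr, conj_conj]
    exact hq
  · intro p _
    exact conj_conj p
  · intro q _
    exact conj_conj q


/-! ### Canonical decomposition `x = sv · r ^ tv` with `r ∤ sv` -/

def tv (r x : ℕ) : ℕ := Nat.maxPowDiv r x

def sv (r x : ℕ) : ℕ := x / r ^ tv r x

lemma pow_tv_dvd (r x : ℕ) : r ^ tv r x ∣ x := Nat.maxPowDiv.pow_dvd (p := r) (n := x)

lemma sv_mul_pow (r x : ℕ) : sv r x * r ^ tv r x = x := Nat.div_mul_cancel (pow_tv_dvd r x)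

lemma not_dvd_sv {r x : ℕ} (hr : 2 ≤ r) (hx : x ≠ 0) : ¬ r ∣ sv r x := by
  rintro ⟨c, hc⟩
  have hdvd : r ^ (tv r x + 1) ∣ x := by
    have h1 : x = r ^ (tv r x + 1) * c := by
      conv_lhs => rw [← sv_mul_pow r x]
      rw [hc]
      ring
    exact ⟨c, h1⟩
  have hle := (Nat.pow_dvd_iff_le_padicValNat (p := r) (n := x) (by omega) hx).1 hdvd
  have : tv r x + 1 ≤ tv r x := hle
  omega

lemma sv_pos {r x : ℕ} (hx : 0 < x) : 0 < sv r x := by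
  rcases Nat.eq_zero_or_pos (sv r x) with h | h
  · have := sv_mul_pow r x
    rw [h, zero_mul] at this
    omega
  · exact h

lemma canon_unique {r s t x : ℕ} (hr : 2 ≤ r) (hs : ¬ r ∣ s) (hx : x = s * r ^ t)
    (hx0 : x ≠ 0) : t = tv r x ∧ s = sv r x := by
  have hpow : (0:ℕ) < r ^ t := pow_pos (by omega) t
  have ht : t ≤ tv r x :=
    (Nat.pow_dvd_iff_le_padicValNat (p := r) (k := t) (n := x) (by omega) hx0).1 ⟨s, by rw [hx]; ring⟩
  rcases Nat.eq_or_lt_of_le ht with h | h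
  · refine ⟨h, ?_⟩
    rw [sv, ← h, hx, Nat.mul_div_cancel _ hpow]
  · exfalso
    have hdvd : r ^ (t + 1) ∣ x := dvd_trans (pow_dvd_pow r h) (pow_tv_dvd r x)
    obtain ⟨c, hc⟩ := hdvd
    rw [hx] at hc
    have hcc : s * r ^ t = (r * c) * r ^ t := by rw [hc]; ring
    have hs' : s = r * c := Nat.eq_of_mul_eq_mul_right hpow hcc
    exact hs ⟨c, hs'⟩

lemma tv_lt_self {r x : ℕ} (hr : 2 ≤ r) (hx : 0 < x) : tv r x < x :=
  lt_of_lt_of_le (Nat.lt_pow_self (by omega)) (Nat.le_of_dvd hx (pow_tv_dvd r x))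

lemma tv_canon {r s t : ℕ} (hr : 2 ≤ r) (hs : ¬ r ∣ s) (hs0 : s ≠ 0) :
    tv r (s * r ^ t) = t ∧ sv r (s * r ^ t) = s := by
  have h0 : s * r ^ t ≠ 0 := by
    have : 0 < r ^ t := pow_pos (by omega) t
    have hs1 : 0 < s := Nat.pos_of_ne_zero hs0
    positivity
  obtain ⟨h1, h2⟩ := canon_unique hr hs rfl h0
  exact ⟨h1.symm, h2.symm⟩


/-! ### The splitting map -/

def gSplit (r : ℕ) (s : Multiset ℕ) : Multiset ℕ :=
  s.bind (fun x => Multiset.replicate (r ^ tv r x) (sv r x))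

lemma gSplit_sum (r : ℕ) (s : Multiset ℕ) : (gSplit r s).sum = s.sum := by
  rw [gSplit, Multiset.sum_bind]
  have : Multiset.map (fun a => (Multiset.replicate (r ^ tv r a) (sv r a)).sum) s
      = Multiset.map id s := by
    apply Multiset.map_congr rfl
    intro x _
    rw [Multiset.sum_replicate, smul_eq_mul, mul_comm, sv_mul_pow, id]
  rw [this, Multiset.map_id]

lemma exists_of_mem_gSplit {r : ℕ} {s : Multiset ℕ} {y : ℕ} (hy : y ∈ gSplit r s) :
    ∃ x ∈ s, y = sv r x := by
  rw [gSplit, Multiset.mem_bind] at hy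
  obtain ⟨x, hx, hyx⟩ := hy
  rw [Multiset.eq_of_mem_replicate hyx]
  exact ⟨x, hx, rfl⟩

lemma gSplit_pos {r : ℕ} {s : Multiset ℕ} (hpos : ∀ x ∈ s, 0 < x) {y : ℕ}
    (hy : y ∈ gSplit r s) : 0 < y := by
  obtain ⟨x, hx, rfl⟩ := exists_of_mem_gSplit hy
  exact sv_pos (hpos x hx)

lemma gSplit_reg {r : ℕ} (hr : 2 ≤ r) {s : Multiset ℕ} (hpos : ∀ x ∈ s, 0 < x) {y : ℕ}
    (hy : y ∈ gSplit r s) : ¬ r ∣ y := by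
  obtain ⟨x, hx, rfl⟩ := exists_of_mem_gSplit hy
  exact not_dvd_sv hr (by have := hpos x hx; omega)

lemma count_gSplit {r : ℕ} (hr : 2 ≤ r) (s : Multiset ℕ) (hpos : ∀ x ∈ s, 0 < x) (T : ℕ)
    (hT : ∀ x ∈ s, tv r x < T) {y : ℕ} (hy : ¬ r ∣ y) :
    Multiset.count y (gSplit r s) = ∑ t ∈ Finset.range T, r ^ t * Multiset.count (y * r ^ t) s := by
  induction s using Multiset.induction with
  | empty => simp [gSplit]
  | cons x s ih =>
    have hx0 : 0 < x := hpos x (by simp)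
    have hy0 : 0 < y := by
      rcases Nat.eq_zero_or_pos y with rfl | h
      · exact absurd ⟨0, rfl⟩ hy
      · exact h
    rw [gSplit, Multiset.cons_bind, Multiset.count_add, ← gSplit,
      ih (fun z hz => hpos z (by simp [hz])) (fun z hz => hT z (by simp [hz]))]
    simp only [Multiset.count_cons]
    have hdist : ∑ t ∈ Finset.range T, r ^ t * (Multiset.count (y * r ^ t) s
        + if y * r ^ t = x then 1 else 0)
        = (∑ t ∈ Finset.range T, r ^ t * Multiset.count (y * r ^ t) s)
          + ∑ t ∈ Finset.range T, r ^ t * (if y * r ^ t = x then 1 else 0) := by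
      rw [← Finset.sum_add_distrib]
      apply Finset.sum_congr rfl
      intro t _
      ring
    rw [hdist]
    have hkey : Multiset.count y (Multiset.replicate (r ^ tv r x) (sv r x))
        = ∑ t ∈ Finset.range T, r ^ t * (if y * r ^ t = x then 1 else 0) := by
      rw [Multiset.count_replicate]
      by_cases h : sv r x = y
      · rw [if_pos h]
        rw [Finset.sum_eq_single (tv r x)]
        · have : y * r ^ tv r x = x := by rw [← h, sv_mul_pow]
          rw [if_pos this, mul_one]
        · intro t _ hne
          have : ¬ y * r ^ t = x := by
            intro hcontra
            obtain ⟨h1, _⟩ := canon_unique hr hy hcontra.symm (by omega)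
            exact hne h1
          rw [if_neg this, mul_zero]
        · intro hnot
          exact absurd (Finset.mem_range.2 (hT x (by simp))) hnot
      · rw [if_neg h]
        symm
        apply Finset.sum_eq_zero
        intro t _
        have : ¬ y * r ^ t = x := by
          intro hcontra
          obtain ⟨_, h2⟩ := canon_unique hr hy hcontra.symm (by omega)
          exact h h2.symm
        rw [if_neg this, mul_zero]
    omega

/-! ### Base-`r` digit uniqueness -/

lemma digits_unique {r : ℕ} (hr : 2 ≤ r) : ∀ (T : ℕ) (a b : ℕ → ℕ), (∀ t, a t < r) →
    (∀ t, b t < r) →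
    (∑ t ∈ Finset.range T, r ^ t * a t) = (∑ t ∈ Finset.range T, r ^ t * b t) →
    ∀ t < T, a t = b t := by
  intro T
  induction T with
  | zero => intro a b _ _ _ t ht; omega
  | succ T ih =>
    intro a b ha hb heq t ht
    rw [Finset.sum_range_succ' (fun t => r ^ t * a t), Finset.sum_range_succ'] at heq
    simp only [pow_zero, one_mul] at heq
    have hA : ∑ k ∈ Finset.range T, r ^ (k+1) * a (k+1)
        = r * ∑ k ∈ Finset.range T, r ^ k * a (k+1) := by
      rw [Finset.mul_sum]
      apply Finset.sum_congr rfl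
      intro k _
      ring
    have hB : ∑ k ∈ Finset.range T, r ^ (k+1) * b (k+1)
        = r * ∑ k ∈ Finset.range T, r ^ k * b (k+1) := by
      rw [Finset.mul_sum]
      apply Finset.sum_congr rfl
      intro k _
      ring
    rw [hA, hB] at heq
    set A := ∑ k ∈ Finset.range T, r ^ k * a (k+1) with hAdef
    set B := ∑ k ∈ Finset.range T, r ^ k * b (k+1) with hBdef
    have h0 : a 0 = b 0 := by
      have h1 := congrArg (· % r) heq
      simpa [Nat.mul_add_mod, Nat.mod_eq_of_lt (ha 0), Nat.mod_eq_of_lt (hb 0)] using h1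
    have hAB : A = B := by
      have h1 := congrArg (· / r) heq
      rw [Nat.mul_add_div (by omega), Nat.mul_add_div (by omega),
        Nat.div_eq_of_lt (ha 0), Nat.div_eq_of_lt (hb 0)] at h1
      omega
    cases t with
    | zero => exact h0
    | succ u =>
      exact ih (fun k => a (k+1)) (fun k => b (k+1)) (fun k => ha (k+1)) (fun k => hb (k+1))
        hAB u (by omega)

lemma gSplit_inj {r : ℕ} (hr : 2 ≤ r) {s₁ s₂ : Multiset ℕ} (h1 : ∀ x ∈ s₁, 0 < x)
    (h2 : ∀ x ∈ s₂, 0 < x) (hres1 : ∀ y, s₁.count y ≤ r - 1) (hres2 : ∀ y, s₂.count y ≤ r - 1)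
    (heq : gSplit r s₁ = gSplit r s₂) : s₁ = s₂ := by
  rw [Multiset.ext]
  intro x
  rcases Nat.eq_zero_or_pos x with rfl | hx
  · rw [Multiset.count_eq_zero.2 (fun h => by have := h1 0 h; omega),
      Multiset.count_eq_zero.2 (fun h => by have := h2 0 h; omega)]
  · set T := s₁.sum + s₂.sum + x + 1 with hTdef
    have hT1 : ∀ z ∈ s₁, tv r z < T := by
      intro z hz
      have hzs : z ≤ s₁.sum := Multiset.single_le_sum (fun y _ => Nat.zero_le y) z hz
      have := tv_lt_self hr (h1 z hz)
      omega
    have hT2 : ∀ z ∈ s₂, tv r z < T := by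
      intro z hz
      have hzs : z ≤ s₂.sum := Multiset.single_le_sum (fun y _ => Nat.zero_le y) z hz
      have := tv_lt_self hr (h2 z hz)
      omega
    have hy : ¬ r ∣ sv r x := not_dvd_sv hr (by omega)
    have hc1 := count_gSplit hr s₁ h1 T hT1 hy
    have hc2 := count_gSplit hr s₂ h2 T hT2 hy
    rw [heq, hc2] at hc1
    have hdig := digits_unique hr T (fun t => Multiset.count (sv r x * r ^ t) s₂)
      (fun t => Multiset.count (sv r x * r ^ t) s₁)
      (fun t => lt_of_le_of_lt (hres2 (sv r x * r ^ t)) (by omega))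
      (fun t => lt_of_le_of_lt (hres1 (sv r x * r ^ t)) (by omega)) hc1 (tv r x)
      (by have := tv_lt_self hr hx; omega)
    have hdig2 : Multiset.count (sv r x * r ^ tv r x) s₂
        = Multiset.count (sv r x * r ^ tv r x) s₁ := hdig
    rw [sv_mul_pow] at hdig2
    exact hdig2.symm


/-! ### The unsplitting (digit) map -/

def digitsM (r s M : ℕ) : Multiset ℕ :=
  ∑ t ∈ Finset.range ((Nat.digits r M).length),
    Multiset.replicate ((Nat.digits r M).getD t 0) (s * r ^ t)

def gUnsplit (r : ℕ) (ρ : Multiset ℕ) : Multiset ℕ :=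
  ∑ s ∈ ρ.toFinset, digitsM r s (ρ.count s)

lemma count_digitsM {r : ℕ} (hr : 2 ≤ r) {s : ℕ} (hs : ¬ r ∣ s) (M : ℕ) {y : ℕ}
    (hy : 0 < y) :
    Multiset.count y (digitsM r s M)
      = if sv r y = s then (Nat.digits r M).getD (tv r y) 0 else 0 := by
  have hs0 : s ≠ 0 := by rintro rfl; exact hs ⟨0, rfl⟩
  rw [digitsM, Multiset.count_sum']
  have hrepl : ∀ t, Multiset.count y (Multiset.replicate ((Nat.digits r M).getD t 0) (s * r ^ t))
      = if s * r ^ t = y then (Nat.digits r M).getD t 0 else 0 := fun t =>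
    Multiset.count_replicate _ _ _
  by_cases h : sv r y = s
  · rw [if_pos h]
    rw [Finset.sum_eq_single (tv r y)]
    · rw [hrepl, if_pos (by rw [← h, sv_mul_pow])]
    · intro t _ hne
      rw [hrepl, if_neg]
      intro hcontra
      obtain ⟨h1, _⟩ := canon_unique hr hs hcontra.symm (by omega)
      exact hne h1
    · intro hnot
      rw [hrepl, if_pos (by rw [← h, sv_mul_pow]), List.getD_eq_default]
      rw [Finset.mem_range, not_lt] at hnot
      exact hnot
  · rw [if_neg h]
    apply Finset.sum_eq_zero
    intro t _
    rw [hrepl, if_neg]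
    intro hcontra
    obtain ⟨_, h2⟩ := canon_unique hr hs hcontra.symm (by omega)
    exact h h2.symm

lemma count_gUnsplit {r : ℕ} (hr : 2 ≤ r) {ρ : Multiset ℕ} (hreg : ∀ x ∈ ρ, ¬ r ∣ x)
    {y : ℕ} (hy : 0 < y) :
    Multiset.count y (gUnsplit r ρ) = (Nat.digits r (ρ.count (sv r y))).getD (tv r y) 0 := by
  rw [gUnsplit, Multiset.count_sum']
  by_cases hmem : sv r y ∈ ρ.toFinset
  · rw [Finset.sum_eq_single (sv r y)]
    · rw [count_digitsM hr (hreg _ (Multiset.mem_toFinset.1 hmem)) _ hy, if_pos rfl]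
    · intro b hb hne
      rw [count_digitsM hr (hreg b (Multiset.mem_toFinset.1 hb)) _ hy,
        if_neg (fun hcontra => hne hcontra.symm)]
    · intro hnot
      exact absurd hmem hnot
  · have hcnt : ρ.count (sv r y) = 0 := by
      rw [Multiset.count_eq_zero]
      intro hcontra
      exact hmem (Multiset.mem_toFinset.2 hcontra)
    rw [hcnt]
    simp only [Nat.digits_zero, List.getD_nil]
    apply Finset.sum_eq_zero
    intro b hb
    rw [count_digitsM hr (hreg b (Multiset.mem_toFinset.1 hb)) _ hy, if_neg]
    intro hcontra
    exact hmem (hcontra ▸ hb)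

lemma gUnsplit_pos {r : ℕ} (hr : 2 ≤ r) {ρ : Multiset ℕ} (hpos : ∀ x ∈ ρ, 0 < x)
    {y : ℕ} (hy : y ∈ gUnsplit r ρ) : 0 < y := by
  rw [gUnsplit, Multiset.mem_sum] at hy
  obtain ⟨s, hs, hys⟩ := hy
  rw [digitsM, Multiset.mem_sum] at hys
  obtain ⟨t, _, hyt⟩ := hys
  rw [Multiset.eq_of_mem_replicate hyt]
  have hs0 : 0 < s := hpos s (Multiset.mem_toFinset.1 hs)
  have : 0 < r ^ t := pow_pos (by omega) t
  positivity

lemma gUnsplit_restricted {r : ℕ} (hr : 2 ≤ r) {ρ : Multiset ℕ} (hpos : ∀ x ∈ ρ, 0 < x)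
    (hreg : ∀ x ∈ ρ, ¬ r ∣ x) (y : ℕ) : (gUnsplit r ρ).count y ≤ r - 1 := by
  rcases Nat.eq_zero_or_pos y with rfl | hy
  · rw [Multiset.count_eq_zero.2 (fun h => by have := gUnsplit_pos hr hpos h; omega)]
    omega
  · rw [count_gUnsplit hr hreg hy]
    set l := Nat.digits r (ρ.count (sv r y)) with hl
    by_cases h : tv r y < l.length
    · have hmem : l.getD (tv r y) 0 ∈ l := by
        rw [List.getD_eq_getElem l 0 h]
        exact List.getElem_mem h
      have := Nat.digits_lt_base (by omega) hmem
      omega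
    · rw [List.getD_eq_default l 0 (by omega)]
      omega

lemma sum_getD_digits {r : ℕ} (hr : 2 ≤ r) : ∀ (l : List ℕ) (T : ℕ), l.length ≤ T →
    ∑ t ∈ Finset.range T, r ^ t * l.getD t 0 = Nat.ofDigits r l := by
  intro l
  induction l with
  | nil =>
    intro T _
    rw [Nat.ofDigits_nil]
    apply Finset.sum_eq_zero
    intro t _
    simp
  | cons a l ih =>
    intro T hT
    cases T with
    | zero => simp at hT
    | succ T =>
      rw [Finset.sum_range_succ' (fun t => r ^ t * (a :: l).getD t 0)]
      simp only [pow_zero, one_mul, List.getD_cons_zero, List.getD_cons_succ]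
      have hstep : ∑ k ∈ Finset.range T, r ^ (k + 1) * l.getD k 0
          = r * ∑ k ∈ Finset.range T, r ^ k * l.getD k 0 := by
        rw [Finset.mul_sum]
        apply Finset.sum_congr rfl
        intro k _
        ring
      rw [hstep, ih T (by simpa using hT), Nat.ofDigits_cons]
      omega


lemma digits_len_le {r : ℕ} (hr : 2 ≤ r) (M : ℕ) : (Nat.digits r M).length ≤ M + 1 := by
  rcases Nat.eq_zero_or_pos M with rfl | hM
  · simp
  · rw [Nat.digits_len r M (by omega) (by omega)]
    have := Nat.log_le_self r M
    omega

lemma gSplit_gUnsplit {r : ℕ} (hr : 2 ≤ r) {ρ : Multiset ℕ} (hpos : ∀ x ∈ ρ, 0 < x)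
    (hreg : ∀ x ∈ ρ, ¬ r ∣ x) : gSplit r (gUnsplit r ρ) = ρ := by
  have hupos : ∀ x ∈ gUnsplit r ρ, 0 < x := fun x hx => gUnsplit_pos hr hpos hx
  rw [Multiset.ext]
  intro y
  rcases Nat.eq_zero_or_pos y with rfl | hy
  · rw [Multiset.count_eq_zero.2 (fun h => by have := gSplit_pos hupos h; omega),
      Multiset.count_eq_zero.2 (fun h => by have := hpos 0 h; omega)]
  · by_cases hyreg : r ∣ y
    · rw [Multiset.count_eq_zero.2 (fun h => (gSplit_reg hr hupos h) hyreg),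
        Multiset.count_eq_zero.2 (fun h => (hreg y h) hyreg)]
    · set M := ρ.count y with hM
      set T := (gUnsplit r ρ).sum + M + y + 2 with hT
      have hT1 : ∀ z ∈ gUnsplit r ρ, tv r z < T := by
        intro z hz
        have hzs : z ≤ (gUnsplit r ρ).sum :=
          Multiset.single_le_sum (fun w _ => Nat.zero_le w) z hz
        have := tv_lt_self hr (hupos z hz)
        omega
      rw [count_gSplit hr _ hupos T hT1 hyreg]
      have hpt : ∀ t, Multiset.count (y * r ^ t) (gUnsplit r ρ)
          = (Nat.digits r M).getD t 0 := by
        intro t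
        have hrt : (0:ℕ) < r ^ t := pow_pos (by omega) t
        have hy0 : 0 < y * r ^ t := by positivity
        rw [count_gUnsplit hr hreg hy0]
        obtain ⟨ht, hs⟩ := tv_canon (t := t) hr hyreg (by omega)
        rw [ht, hs]
      have hsum : ∑ t ∈ Finset.range T, r ^ t * Multiset.count (y * r ^ t) (gUnsplit r ρ)
          = ∑ t ∈ Finset.range T, r ^ t * (Nat.digits r M).getD t 0 := by
        apply Finset.sum_congr rfl
        intro t _
        rw [hpt t]
      rw [hsum, sum_getD_digits hr _ T (by have := digits_len_le hr M; omega),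
        Nat.ofDigits_digits]

lemma gUnsplit_gSplit {r : ℕ} (hr : 2 ≤ r) {μ : Multiset ℕ} (hpos : ∀ x ∈ μ, 0 < x)
    (hres : ∀ y, μ.count y ≤ r - 1) : gUnsplit r (gSplit r μ) = μ := by
  have hspos : ∀ x ∈ gSplit r μ, 0 < x := fun x hx => gSplit_pos hpos hx
  have hsreg : ∀ x ∈ gSplit r μ, ¬ r ∣ x := fun x hx => gSplit_reg hr hpos hx
  apply gSplit_inj hr (fun x hx => gUnsplit_pos hr hspos hx) hpos
    (gUnsplit_restricted hr hspos hsreg) hres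
  exact gSplit_gUnsplit hr hspos hsreg

lemma gUnsplit_sum {r : ℕ} (hr : 2 ≤ r) {ρ : Multiset ℕ} (hpos : ∀ x ∈ ρ, 0 < x)
    (hreg : ∀ x ∈ ρ, ¬ r ∣ x) : (gUnsplit r ρ).sum = ρ.sum := by
  conv_rhs => rw [← gSplit_gUnsplit hr hpos hreg]
  rw [gSplit_sum]


variable {n r : ℕ}

def specialDiv (r : ℕ) {n : ℕ} (p : n.Partition) : ℕ :=
  (p.parts.toFinset.filter (fun s => r ∣ s)).sum id

def specialRep (r : ℕ) {n : ℕ} (p : n.Partition) : ℕ :=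
  (p.parts.toFinset.filter (fun s => r ≤ p.parts.count s)).sum id

lemma oneReg_of_filter_eq {p : n.Partition} {a : ℕ}
    (h : p.parts.toFinset.filter (fun s => r ∣ s) = {a}) :
    IsOneRegular r p ∧ specialDiv r p = a := by
  constructor
  · rw [IsOneRegular, h, Finset.card_singleton]
  · rw [specialDiv, h, Finset.sum_singleton, id]

lemma oneRegular_spec {p : n.Partition} (h : IsOneRegular r p) :
    p.parts.toFinset.filter (fun s => r ∣ s) = {specialDiv r p} := by
  obtain ⟨a, ha⟩ := Finset.card_eq_one.1 h
  rw [(oneReg_of_filter_eq ha).2, ha]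

lemma oneRegular_mem {p : n.Partition} (h : IsOneRegular r p) :
    specialDiv r p ∈ p.parts := by
  have := oneRegular_spec h ▸ Finset.mem_singleton_self (specialDiv r p)
  exact Multiset.mem_toFinset.1 (Finset.mem_filter.1 this).1

lemma oneRegular_dvd {p : n.Partition} (h : IsOneRegular r p) :
    r ∣ specialDiv r p := by
  have := oneRegular_spec h ▸ Finset.mem_singleton_self (specialDiv r p)
  exact (Finset.mem_filter.1 this).2

lemma oneRegular_unique {p : n.Partition} (h : IsOneRegular r p)
    {x : ℕ} (hx : x ∈ p.parts) (hdvd : r ∣ x) : x = specialDiv r p := by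
  have hmem : x ∈ p.parts.toFinset.filter (fun s => r ∣ s) :=
    Finset.mem_filter.2 ⟨Multiset.mem_toFinset.2 hx, hdvd⟩
  rw [oneRegular_spec h, Finset.mem_singleton] at hmem
  exact hmem

lemma oneRegular_decomp {p : n.Partition} (h : IsOneRegular r p) :
    p.parts = p.parts.filter (fun x => ¬ r ∣ x)
      + Multiset.replicate (p.parts.count (specialDiv r p)) (specialDiv r p) := by
  have h1 : p.parts.filter (fun x => r ∣ x)
      = p.parts.filter (fun x => x = specialDiv r p) := by
    apply Multiset.filter_congr
    intro x hx
    constructor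
    · intro hd; exact oneRegular_unique h hx hd
    · rintro rfl; exact oneRegular_dvd h
  have h2 : p.parts.filter (fun x => x = specialDiv r p)
      = Multiset.replicate (p.parts.count (specialDiv r p)) (specialDiv r p) :=
    Multiset.filter_eq' _ _
  conv_lhs => rw [← Multiset.filter_add_not (fun x => r ∣ x) p.parts]
  rw [h1, h2, add_comm]

lemma oneRep_of_filter_eq {p : n.Partition} {a : ℕ}
    (h : p.parts.toFinset.filter (fun s => r ≤ p.parts.count s) = {a}) :
    IsOneRestricted r p ∧ specialRep r p = a := by
  constructor
  · rw [IsOneRestricted, h, Finset.card_singleton]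
  · rw [specialRep, h, Finset.sum_singleton, id]

lemma oneRep_spec {p : n.Partition} (h : IsOneRestricted r p) :
    p.parts.toFinset.filter (fun s => r ≤ p.parts.count s) = {specialRep r p} := by
  obtain ⟨a, ha⟩ := Finset.card_eq_one.1 h
  rw [(oneRep_of_filter_eq ha).2, ha]

lemma oneRep_count {p : n.Partition} (h : IsOneRestricted r p) :
    r ≤ p.parts.count (specialRep r p) := by
  have := oneRep_spec h ▸ Finset.mem_singleton_self (specialRep r p)
  exact (Finset.mem_filter.1 this).2

lemma oneRep_unique {p : n.Partition} (hr : 2 ≤ r) (h : IsOneRestricted r p)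
    {v : ℕ} (hv : r ≤ p.parts.count v) : v = specialRep r p := by
  have hmem : v ∈ p.parts.toFinset :=
    Multiset.mem_toFinset.2 (Multiset.count_pos.1 (by omega))
  have : v ∈ p.parts.toFinset.filter (fun s => r ≤ p.parts.count s) :=
    Finset.mem_filter.2 ⟨hmem, hv⟩
  rw [oneRep_spec h, Finset.mem_singleton] at this
  exact this



/-! ### The maps between one-regular and one-restricted partitions -/

lemma oneRegular_rho_pos {p : n.Partition} (z : ℕ)
    (hz : z ∈ p.parts.filter (fun x => ¬ r ∣ x)) : 0 < z :=
  p.parts_pos (Multiset.mem_of_mem_filter hz)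

lemma oneRegular_rho_reg {p : n.Partition} (z : ℕ)
    (hz : z ∈ p.parts.filter (fun x => ¬ r ∣ x)) : ¬ r ∣ z :=
  (Multiset.mem_filter.1 hz).2

def phiOD (hr : 2 ≤ r) (p : n.Partition) (h : IsOneRegular r p) : n.Partition where
  parts := gUnsplit r (p.parts.filter (fun x => ¬ r ∣ x))
    + Multiset.replicate (p.parts.count (specialDiv r p) * r) (specialDiv r p / r)
  parts_pos := by
    intro x hx
    rw [Multiset.mem_add] at hx
    rcases hx with hx | hx
    · exact gUnsplit_pos hr oneRegular_rho_pos hx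
    · rw [Multiset.eq_of_mem_replicate hx]
      have hy := p.parts_pos (oneRegular_mem h)
      exact Nat.div_pos (Nat.le_of_dvd (by omega) (oneRegular_dvd h)) (by omega)
  parts_sum := by
    rw [Multiset.sum_add, Multiset.sum_replicate, smul_eq_mul,
      gUnsplit_sum hr oneRegular_rho_pos oneRegular_rho_reg]
    have hyr : r * (specialDiv r p / r) = specialDiv r p :=
      Nat.mul_div_cancel' (oneRegular_dvd h)
    have hsum : (p.parts.filter (fun x => ¬ r ∣ x)).sum
        + (p.parts.count (specialDiv r p)) * specialDiv r p = n := by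
      conv_rhs => rw [← p.parts_sum]
      conv_rhs => rw [oneRegular_decomp h]
      rw [Multiset.sum_add, Multiset.sum_replicate, smul_eq_mul]
    have hmul : p.parts.count (specialDiv r p) * r * (specialDiv r p / r)
        = p.parts.count (specialDiv r p) * specialDiv r p := by
      rw [mul_assoc, hyr]
    omega

lemma phiOD_parts (hr : 2 ≤ r) (p : n.Partition) (h : IsOneRegular r p) :
    (phiOD hr p h).parts = gUnsplit r (p.parts.filter (fun x => ¬ r ∣ x))
      + Multiset.replicate (p.parts.count (specialDiv r p) * r) (specialDiv r p / r) := rfl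

lemma phiOD_filter (hr : 2 ≤ r) (p : n.Partition) (h : IsOneRegular r p) :
    (phiOD hr p h).parts.toFinset.filter
        (fun s => r ≤ (phiOD hr p h).parts.count s) = {specialDiv r p / r} := by
  have hcount : ∀ v, (phiOD hr p h).parts.count v
      = (gUnsplit r (p.parts.filter (fun x => ¬ r ∣ x))).count v
        + (if specialDiv r p / r = v then p.parts.count (specialDiv r p) * r else 0) := by
    intro v
    rw [phiOD_parts, Multiset.count_add, Multiset.count_replicate]
  have hm1 : 1 ≤ p.parts.count (specialDiv r p) := Multiset.count_pos.2 (oneRegular_mem h)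
  ext v
  simp only [Finset.mem_filter, Multiset.mem_toFinset, Finset.mem_singleton]
  constructor
  · rintro ⟨hmem, hge⟩
    by_contra hne
    rw [hcount, if_neg (fun hh => hne hh.symm), add_zero] at hge
    have := gUnsplit_restricted hr (oneRegular_rho_pos (p := p) (r := r))
      (oneRegular_rho_reg (p := p)) v
    omega
  · rintro rfl
    have hge : r ≤ (phiOD hr p h).parts.count (specialDiv r p / r) := by
      rw [hcount, if_pos rfl]
      have : r ≤ p.parts.count (specialDiv r p) * r := Nat.le_mul_of_pos_left r hm1
      omega
    refine ⟨Multiset.count_pos.1 (lt_of_lt_of_le (by omega) hge), hge⟩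

lemma phiOD_isOneRestricted (hr : 2 ≤ r) (p : n.Partition) (h : IsOneRegular r p) :
    IsOneRestricted r (phiOD hr p h) :=
  (oneRep_of_filter_eq (phiOD_filter hr p h)).1

lemma phiOD_specialRep (hr : 2 ≤ r) (p : n.Partition) (h : IsOneRegular r p) :
    specialRep r (phiOD hr p h) = specialDiv r p / r :=
  (oneRep_of_filter_eq (phiOD_filter hr p h)).2

/-! `phiDO` -/

lemma oneRep_k_pos {q : n.Partition} (hr : 2 ≤ r) (h : IsOneRestricted r q) :
    1 ≤ q.parts.count (specialRep r q) / r :=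
  Nat.one_le_div_iff (by omega) |>.2 (oneRep_count h)

lemma oneRep_replicate_le {q : n.Partition} (h : IsOneRestricted r q) :
    Multiset.replicate ((q.parts.count (specialRep r q) / r) * r) (specialRep r q)
      ≤ q.parts :=
  Multiset.le_count_iff_replicate_le.1 (Nat.div_mul_le_self _ _)

lemma oneRep_sigma_pos {q : n.Partition} (h : IsOneRestricted r q) (z : ℕ)
    (hz : z ∈ q.parts - Multiset.replicate ((q.parts.count (specialRep r q) / r) * r)
      (specialRep r q)) : 0 < z :=
  q.parts_pos (Multiset.mem_of_le (tsub_le_self) hz)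

lemma oneRep_sigma_res {q : n.Partition} (hr : 2 ≤ r) (h : IsOneRestricted r q) (v : ℕ) :
    (q.parts - Multiset.replicate ((q.parts.count (specialRep r q) / r) * r)
      (specialRep r q)).count v ≤ r - 1 := by
  rw [Multiset.count_sub, Multiset.count_replicate]
  by_cases hv : v = specialRep r q
  · rw [if_pos hv.symm, hv]
    have h1 := Nat.div_add_mod (q.parts.count (specialRep r q)) r
    have h2 : q.parts.count (specialRep r q) % r < r := Nat.mod_lt _ (by omega)
    have h4 : q.parts.count (specialRep r q) / r * r
        = r * (q.parts.count (specialRep r q) / r) := mul_comm _ _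
    omega
  · rw [if_neg (fun hh => hv hh.symm)]
    have : ¬ r ≤ q.parts.count v := by
      intro hcon
      exact hv (oneRep_unique hr h hcon)
    omega

lemma oneRep_decomp {q : n.Partition} (h : IsOneRestricted r q) :
    (q.parts - Multiset.replicate ((q.parts.count (specialRep r q) / r) * r)
        (specialRep r q))
      + Multiset.replicate ((q.parts.count (specialRep r q) / r) * r) (specialRep r q)
      = q.parts :=
  tsub_add_cancel_of_le (oneRep_replicate_le h)

lemma oneRep_s_pos {q : n.Partition} (hr : 2 ≤ r) (h : IsOneRestricted r q) :
    0 < specialRep r q := by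
  apply q.parts_pos
  apply Multiset.count_pos.1
  have := oneRep_count h
  omega

def phiDO (hr : 2 ≤ r) (q : n.Partition) (h : IsOneRestricted r q) : n.Partition where
  parts := gSplit r (q.parts - Multiset.replicate
      ((q.parts.count (specialRep r q) / r) * r) (specialRep r q))
    + Multiset.replicate (q.parts.count (specialRep r q) / r) (r * specialRep r q)
  parts_pos := by
    intro x hx
    rw [Multiset.mem_add] at hx
    rcases hx with hx | hx
    · exact gSplit_pos (oneRep_sigma_pos h) hx
    · rw [Multiset.eq_of_mem_replicate hx]
      have := oneRep_s_pos hr h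
      positivity
  parts_sum := by
    rw [Multiset.sum_add, Multiset.sum_replicate, smul_eq_mul, gSplit_sum]
    have hdec := oneRep_decomp h
    have hq := q.parts_sum
    have hsum : (q.parts - Multiset.replicate ((q.parts.count (specialRep r q) / r) * r)
          (specialRep r q)).sum
        + ((q.parts.count (specialRep r q) / r) * r) * specialRep r q = n := by
      conv_rhs => rw [← hq, ← hdec]
      rw [Multiset.sum_add, Multiset.sum_replicate, smul_eq_mul]
    have hmul : (q.parts.count (specialRep r q) / r) * (r * specialRep r q)
        = ((q.parts.count (specialRep r q) / r) * r) * specialRep r q := by ring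
    omega

lemma phiDO_parts (hr : 2 ≤ r) (q : n.Partition) (h : IsOneRestricted r q) :
    (phiDO hr q h).parts = gSplit r (q.parts - Multiset.replicate
        ((q.parts.count (specialRep r q) / r) * r) (specialRep r q))
      + Multiset.replicate (q.parts.count (specialRep r q) / r) (r * specialRep r q) := rfl

lemma phiDO_filter (hr : 2 ≤ r) (q : n.Partition) (h : IsOneRestricted r q) :
    (phiDO hr q h).parts.toFinset.filter (fun s => r ∣ s) = {r * specialRep r q} := by
  ext v
  simp only [Finset.mem_filter, Multiset.mem_toFinset, Finset.mem_singleton]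
  constructor
  · rintro ⟨hmem, hdvd⟩
    rw [phiDO_parts, Multiset.mem_add] at hmem
    rcases hmem with hmem | hmem
    · exact absurd hdvd (gSplit_reg hr (oneRep_sigma_pos h) hmem)
    · exact Multiset.eq_of_mem_replicate hmem
  · rintro rfl
    refine ⟨?_, Dvd.intro _ rfl⟩
    rw [phiDO_parts, Multiset.mem_add]
    right
    rw [Multiset.mem_replicate]
    have := oneRep_k_pos hr h
    exact ⟨by omega, rfl⟩

lemma phiDO_isOneRegular (hr : 2 ≤ r) (q : n.Partition) (h : IsOneRestricted r q) :
    IsOneRegular r (phiDO hr q h) :=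
  (oneReg_of_filter_eq (phiDO_filter hr q h)).1

lemma phiDO_specialDiv (hr : 2 ≤ r) (q : n.Partition) (h : IsOneRestricted r q) :
    specialDiv r (phiDO hr q h) = r * specialRep r q :=
  (oneReg_of_filter_eq (phiDO_filter hr q h)).2

/-! ### Round trips and the main bijection -/

lemma phiDO_phiOD (hr : 2 ≤ r) (p : n.Partition) (h : IsOneRegular r p)
    (h2 : IsOneRestricted r (phiOD hr p h)) : phiDO hr (phiOD hr p h) h2 = p := by
  apply Nat.Partition.ext
  have hyr : r * (specialDiv r p / r) = specialDiv r p :=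
    Nat.mul_div_cancel' (oneRegular_dvd h)
  have hs' : specialRep r (phiOD hr p h) = specialDiv r p / r := phiOD_specialRep hr p h
  have hd : (gUnsplit r (p.parts.filter (fun x => ¬ r ∣ x))).count (specialDiv r p / r)
      ≤ r - 1 :=
    gUnsplit_restricted hr (oneRegular_rho_pos (p := p) (r := r))
      (oneRegular_rho_reg (p := p)) _
  have hc : (phiOD hr p h).parts.count (specialRep r (phiOD hr p h))
      = (gUnsplit r (p.parts.filter (fun x => ¬ r ∣ x))).count (specialDiv r p / r)
        + p.parts.count (specialDiv r p) * r := by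
    rw [hs', phiOD_parts, Multiset.count_add, Multiset.count_replicate, if_pos rfl]
  have hk : (phiOD hr p h).parts.count (specialRep r (phiOD hr p h)) / r
      = p.parts.count (specialDiv r p) := by
    rw [hc, Nat.add_mul_div_right _ _ (show 0 < r by omega),
      Nat.div_eq_of_lt (by omega), zero_add]
  rw [phiDO_parts, hk, hs', phiOD_parts, add_tsub_cancel_right,
    gSplit_gUnsplit hr (oneRegular_rho_pos (p := p) (r := r))
      (oneRegular_rho_reg (p := p)), hyr]
  exact (oneRegular_decomp h).symm

lemma phiOD_phiDO (hr : 2 ≤ r) (q : n.Partition) (h : IsOneRestricted r q)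
    (h2 : IsOneRegular r (phiDO hr q h)) : phiOD hr (phiDO hr q h) h2 = q := by
  apply Nat.Partition.ext
  have hy' : specialDiv r (phiDO hr q h) = r * specialRep r q := phiDO_specialDiv hr q h
  set k := q.parts.count (specialRep r q) / r with hkdef
  set σ := q.parts - Multiset.replicate (k * r) (specialRep r q) with hsigdef
  have hsreg : ∀ x ∈ gSplit r σ, ¬ r ∣ x := fun x hx =>
    gSplit_reg hr (oneRep_sigma_pos h) hx
  have hcnt : (phiDO hr q h).parts.count (specialDiv r (phiDO hr q h)) = k := by
    rw [hy', phiDO_parts, Multiset.count_add, Multiset.count_replicate, if_pos rfl,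
      Multiset.count_eq_zero.2 (fun hmem => hsreg _ hmem ⟨specialRep r q, rfl⟩), zero_add]
  have hfilt : (phiDO hr q h).parts.filter (fun x => ¬ r ∣ x) = gSplit r σ := by
    rw [phiDO_parts, Multiset.filter_add, Multiset.filter_eq_self.2 hsreg]
    have hrepl : Multiset.filter (fun x => ¬ r ∣ x)
        (Multiset.replicate k (r * specialRep r q)) = 0 := by
      rw [Multiset.filter_eq_nil]
      intro a ha hna
      exact hna (Multiset.eq_of_mem_replicate ha ▸ ⟨specialRep r q, rfl⟩)
    rw [hrepl, add_zero]
  rw [phiOD_parts, hcnt, hfilt, hy',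
    gUnsplit_gSplit hr (oneRep_sigma_pos h) (oneRep_sigma_res hr h),
    Nat.mul_div_cancel_left _ (show 0 < r by omega)]
  exact oneRep_decomp h

lemma card_oneRestricted_eq_card_oneRegular (hr : 2 ≤ r) :
    (Finset.univ.filter (fun q : n.Partition => IsOneRestricted r q)).card
      = (Finset.univ.filter (fun p : n.Partition => IsOneRegular r p)).card := by
  apply Finset.card_bij'
    (fun q hq => phiDO hr q (Finset.mem_filter.1 hq).2)
    (fun p hp => phiOD hr p (Finset.mem_filter.1 hp).2)
  · intro q hq
    exact phiOD_phiDO hr q _ _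
  · intro p hp
    exact phiDO_phiOD hr p _ _
  · intro q hq
    exact Finset.mem_filter.2 ⟨Finset.mem_univ _, phiDO_isOneRegular hr q _⟩
  · intro p hp
    exact Finset.mem_filter.2 ⟨Finset.mem_univ _, phiOD_isOneRestricted hr p _⟩

theorem oneFlat_eq_oneRegular (n r : ℕ) (hr : 2 ≤ r) :
    (Finset.univ.filter (fun p : n.Partition => IsOneFlat r p)).card = (Finset.univ.filter (fun p : n.Partition => IsOneRegular r p)).card := by
  rw [card_oneFlat_eq_card_oneRestricted r (by omega)]
  exact card_oneRestricted_eq_card_oneRegular hr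

end BeckPaper
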